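/- Hybrid under-estimate (following Hedlund–Rantzer): Let J̲ be C¹ with J̲(x_d)=0 satisfying (i) l(x,u) + ⟨∇J̲(x), f_k(x,u)⟩ ≥ 0 for every mode k, every x in the admissible region and u ∈ U, and (ii) l_m(x,u) + J̲(Δ(x,u)) − J̲(x) ≥ 0 for every admissible jump (x,u). Then for any hybrid trajectory with finitely many jumps at times t₁ < ⋯ < t_N, converging to x_d with finite cost, the total cost ∫₀^∞ l dt + Σ_s l_m(x(t_s⁻), u(t_s)) is at least J̲(x(0)). -/

import Mathlib

open MeasureTheory Set Finset

lemma seg_bound {n : ℕ} (J : (Fin n → ℝ) → ℝ) (J' : (Fin n → ℝ) → ((Fin n → ℝ) →L[ℝ] ℝ))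
    (hJ : ∀ y, HasFDerivAt J (J' y) y)
    (x : ℝ → (Fin n → ℝ)) (v : ℝ → (Fin n → ℝ)) (φ : ℝ → ℝ) {a b : ℝ} (hab : a ≤ b)
    (hx : ∀ t ∈ Icc a b, HasDerivAt x (v t) t)
    (hineq : ∀ t ∈ Icc a b, 0 ≤ φ t + J' (x t) (v t))
    (hφ : IntegrableOn φ (Icc a b)) :
    J (x a) - J (x b) ≤ ∫ t in Icc a b, φ t := by
  have hg : ∀ t ∈ Icc a b, HasDerivAt (fun t => -J (x t)) (-(J' (x t) (v t))) t :=
    fun t ht => ((hJ (x t)).comp_hasDerivAt t (hx t ht)).neg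
  have key := intervalIntegral.sub_le_integral_of_hasDeriv_right_of_le (g := fun t => -J (x t))
      (g' := fun t => -(J' (x t) (v t))) (φ := φ) hab
      (fun t ht => (hg t ht).continuousAt.continuousWithinAt)
      (fun t ht => (hg t (Ioo_subset_Icc_self ht)).hasDerivWithinAt)
      hφ
      (fun t ht => by have := hineq t (Ioo_subset_Icc_self ht); show -(J' (x t)) (v t) ≤ φ t; linarith)
  rw [intervalIntegral.integral_of_le hab] at key
  rw [MeasureTheory.integral_Icc_eq_integral_Ioc]
  linarith


/-- Hybrid under-estimate (following Hedlund–Rantzer): if `J̲` is `C¹` with `J̲(x_d)=0`,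
satisfies the continuous HJB inequality in every mode on the admissible region `S` and the
jump inequality `l_m(x,u) + J̲(Δ(x,u)) − J̲(x) ≥ 0` on the admissible jump set, then any
hybrid trajectory with finitely many jumps at `τ 1 < ⋯ < τ N`, converging to `x_d` with
finite cost, has total cost at least `J̲(x(0))`. -/
theorem hybrid_under_estimate (n m N : ℕ) (K : Type) 
    (J : (Fin n → ℝ) → ℝ) (J' : (Fin n → ℝ) → ((Fin n → ℝ) →L[ℝ] ℝ))
    (hJ : ∀ y, HasFDerivAt J (J' y) y)
    (l : (Fin n → ℝ) → (Fin m → ℝ) → ℝ)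
    (lm : (Fin n → ℝ) → (Fin m → ℝ) → ℝ)
    (f : K → (Fin n → ℝ) → (Fin m → ℝ) → (Fin n → ℝ))
    (Δ : (Fin n → ℝ) → (Fin m → ℝ) → (Fin n → ℝ))
    (S : Set (Fin n → ℝ)) (U : Set (Fin m → ℝ))
    (Jump : Set ((Fin n → ℝ) × (Fin m → ℝ)))
    (xd : Fin n → ℝ) (hJd : J xd = 0)
    -- (i) continuous HJB inequality in every mode
    (hHJBc : ∀ (k : K), ∀ y ∈ S, ∀ u ∈ U, 0 ≤ l y u + J' y (f k y u))
    -- (ii) jump HJB inequality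
    (hHJBj : ∀ p ∈ Jump, 0 ≤ lm p.1 p.2 + J (Δ p.1 p.2) - J p.1)
    -- jump times 0 = τ 0 < τ 1 < ⋯ < τ N
    (τ : Fin (N + 1) → ℝ) (hτ0 : τ 0 = 0) (hτ : StrictMono τ)
    -- trajectory pieces, modes, continuous control, jump controls
    (xs : Fin (N + 1) → ℝ → (Fin n → ℝ)) (mode : Fin (N + 1) → K)
    (u : ℝ → (Fin m → ℝ)) (w : Fin N → (Fin m → ℝ))
    (hu : ∀ t ∈ Ici (0:ℝ), u t ∈ U)
    -- continuous evolution on each bounded interval, staying in S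
    (hode : ∀ s : Fin N, ∀ t ∈ Icc (τ s.castSucc) (τ s.succ),
      HasDerivAt (xs s.castSucc) (f (mode s.castSucc) (xs s.castSucc t) (u t)) t)
    (hSb : ∀ s : Fin N, ∀ t ∈ Icc (τ s.castSucc) (τ s.succ), xs s.castSucc t ∈ S)
    -- continuous evolution on the final unbounded interval
    (hodeN : ∀ t ∈ Ici (τ (Fin.last N)),
      HasDerivAt (xs (Fin.last N)) (f (mode (Fin.last N)) (xs (Fin.last N) t) (u t)) t)
    (hSN : ∀ t ∈ Ici (τ (Fin.last N)), xs (Fin.last N) t ∈ S)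
    -- jump resets: x(t_s⁺) = Δ(x(t_s⁻), u(t_s)), with admissible jumps
    (hjump : ∀ s : Fin N,
      xs s.succ (τ s.succ) = Δ (xs s.castSucc (τ s.succ)) (w s))
    (hjumpadm : ∀ s : Fin N, (xs s.castSucc (τ s.succ), w s) ∈ Jump)
    -- convergence to x_d and finite cost
    (hconv : Filter.Tendsto (xs (Fin.last N)) Filter.atTop (nhds xd))
    (hint : ∀ s : Fin N,
      IntegrableOn (fun t => l (xs s.castSucc t) (u t)) (Icc (τ s.castSucc) (τ s.succ)))
    (hintN : IntegrableOn (fun t => l (xs (Fin.last N) t) (u t)) (Ici (τ (Fin.last N)))) :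
    J (xs 0 0) ≤
      (∑ s : Fin N, ∫ t in Icc (τ s.castSucc) (τ s.succ), l (xs s.castSucc t) (u t))
      + (∫ t in Ici (τ (Fin.last N)), l (xs (Fin.last N) t) (u t))
      + ∑ s : Fin N, lm (xs s.castSucc (τ s.succ)) (w s) := by

  have hτnn : ∀ i, (0:ℝ) ≤ τ i := fun i => hτ0 ▸ hτ.monotone (Fin.zero_le i)
  set φ : Fin (N+1) → ℝ := fun i => J (xs i (τ i)) with hφdef
  set c : Fin N → ℝ := fun s =>
    (∫ t in Icc (τ s.castSucc) (τ s.succ), l (xs s.castSucc t) (u t))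
      + lm (xs s.castSucc (τ s.succ)) (w s) with hcdef
  -- per-step bound
  have hstep : ∀ s : Fin N, φ s.castSucc - φ s.succ ≤ c s := by
    intro s
    have hab : τ s.castSucc ≤ τ s.succ := (hτ (show s.castSucc < s.succ from Fin.castSucc_lt_succ)).le
    have hseg := seg_bound J J' hJ (xs s.castSucc)
      (fun t => f (mode s.castSucc) (xs s.castSucc t) (u t))
      (fun t => l (xs s.castSucc t) (u t)) hab (hode s)
      (fun t ht => hHJBc (mode s.castSucc) _ (hSb s t ht) (u t)
        (hu t ((hτnn s.castSucc).trans ht.1)))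
      (hint s)
    have hj := hHJBj _ (hjumpadm s)
    rw [← hjump s] at hj
    simp only [φ, c]
    linarith
  -- jump-free tail bound
  have htail : φ (Fin.last N) ≤ ∫ t in Ici (τ (Fin.last N)), l (xs (Fin.last N) t) (u t) := by
    have hbd : ∀ T ∈ Ici (τ (Fin.last N)),
        φ (Fin.last N) - J (xs (Fin.last N) T)
          ≤ ∫ t in (τ (Fin.last N))..T, l (xs (Fin.last N) t) (u t) := by
      intro T hT
      have hseg := seg_bound J J' hJ (xs (Fin.last N))
        (fun t => f (mode (Fin.last N)) (xs (Fin.last N) t) (u t))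
        (fun t => l (xs (Fin.last N) t) (u t)) hT
        (fun t ht => hodeN t ht.1)
        (fun t ht => hHJBc (mode (Fin.last N)) _ (hSN t ht.1) (u t)
          (hu t ((hτnn (Fin.last N)).trans ht.1)))
        (hintN.mono_set Icc_subset_Ici_self)
      rw [intervalIntegral.integral_of_le hT, ← MeasureTheory.integral_Icc_eq_integral_Ioc]
      exact hseg
    have h1 : Filter.Tendsto (fun T => φ (Fin.last N) - J (xs (Fin.last N) T))
        Filter.atTop (nhds (φ (Fin.last N))) := by
      have : Filter.Tendsto (fun T => J (xs (Fin.last N) T)) Filter.atTop (nhds 0) := by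
        rw [← hJd]
        exact ((hJ xd).continuousAt.tendsto).comp hconv
      simpa using tendsto_const_nhds.sub this
    have h2 := MeasureTheory.intervalIntegral_tendsto_integral_Ioi _
      (hintN.mono_set Ioi_subset_Ici_self) Filter.tendsto_id
    rw [MeasureTheory.integral_Ici_eq_integral_Ioi]
    refine le_of_tendsto_of_tendsto h1 h2 ?_
    filter_upwards [Filter.eventually_ge_atTop (τ (Fin.last N))] with T hT using hbd T hT
  -- telescoping
  set G : ℕ → ℝ := fun i => φ ⟨min i N, Nat.lt_succ_of_le (min_le_right _ _)⟩ with hGdef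
  have htele : φ 0 - φ (Fin.last N) = ∑ s : Fin N, (φ s.castSucc - φ s.succ) := by
    have h1 : ∑ s : Fin N, (φ s.castSucc - φ s.succ)
        = ∑ i ∈ Finset.range N, (G i - G (i + 1)) := by
      rw [← Fin.sum_univ_eq_sum_range (fun i => G i - G (i + 1)) N]
      refine Finset.sum_congr rfl fun s _ => ?_
      have e1 : G (s : ℕ) = φ s.castSucc := by
        simp only [hGdef]
        congr 1
        exact Fin.ext (min_eq_left s.isLt.le)
      have e2 : G ((s : ℕ) + 1) = φ s.succ := by
        simp only [hGdef]
        congr 1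
        exact Fin.ext (min_eq_left s.isLt)
      rw [e1, e2]
    rw [h1, Finset.sum_range_sub' G N]
    have e0 : G 0 = φ 0 := by simp [hGdef]
    have eN : G N = φ (Fin.last N) := by
      simp only [hGdef]
      congr 1
      exact Fin.ext (min_self N)
    rw [e0, eN]
  have hsum : ∑ s : Fin N, (φ s.castSucc - φ s.succ) ≤ ∑ s : Fin N, c s :=
    Finset.sum_le_sum fun s _ => hstep s
  have hx0 : J (xs 0 0) = φ 0 := by rw [hφdef]; simp [hτ0]
  have hcsum : ∑ s : Fin N, c s
      = (∑ s : Fin N, ∫ t in Icc (τ s.castSucc) (τ s.succ), l (xs s.castSucc t) (u t))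
        + ∑ s : Fin N, lm (xs s.castSucc (τ s.succ)) (w s) := by
    rw [hcdef, Finset.sum_add_distrib]
  rw [hx0]
  have := htele ▸ hsum
  rw [hcsum] at this
  linarith
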